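/- (Anick, part (i).) Let p be a prime, d ≥ 1, and A = 𝔽_p⟨X_1,…,X_d⟩. Let (Z_i)_{i∈I} be a locally finite family of nonzero homogeneous elements of A of degrees n_i ≥ 1, let C be the two-sided ideal of A generated by the Z_i, and let C·A₁ denote the 𝔽_p-linear span of all products c·z with c ∈ C and z ∈ A₁. Assume that the family of highest terms (Ẑ_i)_{i∈I} is combinatorially free. Then: (a) C equals L + C·A₁, where L is the 𝔽_p-linear span of all products a·Z_i with a ∈ A and i ∈ I; and (b) for every finitely supported family (a_i)_{i∈I} of elements of A with ∑_{i∈I} a_i Z_i ∈ C·A₁, one has a_i ∈ C for every i. (Equivalently, the classes of the Z_i form a basis of C/(C·A₁) as a free left module over B = A/C.) -/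

import Mathlib

noncomputable section

/-- Words in the letters `X_1, …, X_d`: elements of the free monoid on `d` letters,
the letter `X_i` being encoded by `(i - 1 : Fin d)`. -/
abbrev Word (d : ℕ) := FreeMonoid (Fin d)

/-- The free noncommutative polynomial algebra `A = 𝔽_p⟨X_1, …, X_d⟩`, modelled as
the monoid algebra over `ZMod p` of the free monoid on `d` letters. -/
abbrev FA (p d : ℕ) := MonoidAlgebra (ZMod p) (Word d)

/-- The homogeneous component `A^{(n)}`: the `𝔽_p`-span of the monomials (words) of
degree `n`. -/
def homComponent (p d n : ℕ) : Submodule (ZMod p) (FA p d) :=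
  Submodule.span (ZMod p)
    {x | ∃ w : Word d, (FreeMonoid.toList w).length = n ∧ x = MonoidAlgebra.single w 1}

/-- The two-sided ideal of `A` generated by a set `G`: the `𝔽_p`-span of all products
`a * g * b` with `g ∈ G`. -/
def twoSidedSpan (p d : ℕ) (G : Set (FA p d)) : Submodule (ZMod p) (FA p d) :=
  Submodule.span (ZMod p) {x | ∃ a g b : FA p d, g ∈ G ∧ x = a * g * b}

/-- `dim_{𝔽_p} (A^{(n)} / (C ∩ A^{(n)}))`. -/
def bcoef (p d : ℕ) (C : Submodule (ZMod p) (FA p d)) (n : ℕ) : ℕ :=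
  Module.finrank (ZMod p)
    (↥(homComponent p d n) ⧸ (C.comap (homComponent p d n).subtype))

/-- The augmentation ideal `A₁` of `A`: the elements with zero constant term. -/
def augIdeal (p d : ℕ) : Submodule (ZMod p) (FA p d) where
  carrier := {f | f.coeff 1 = 0}
  add_mem' := by
    intro a b ha hb
    simp only [Set.mem_setOf_eq] at *
    show (a + b).coeff 1 = 0
    rw [MonoidAlgebra.coeff_add, Finsupp.add_apply, ha, hb, add_zero]
  zero_mem' := rfl
  smul_mem' := by
    intro c f hf
    simp only [Set.mem_setOf_eq] at *
    show (c • f).coeff 1 = 0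
    rw [MonoidAlgebra.coeff_smul, Finsupp.smul_apply, hf, smul_zero]

/-- `w` is the highest term `Ẑ` of `Z`: it lies in the support of `Z` and is
(lexicographically, for `X_1 < X_2 < ⋯ < X_d`) greater than every other word in the
support of `Z`. -/
def IsHighestTerm (p d : ℕ) (Z : FA p d) (w : Word d) : Prop :=
  w ∈ Z.coeff.support ∧
    ∀ w' ∈ Z.coeff.support, w' ≠ w →
      List.Lex (· < ·) (FreeMonoid.toList w') (FreeMonoid.toList w)

/-- An indexed family of pairwise distinct words is *combinatorially free* if (i) no
word of the family is a factor (submonomial) of another word of the family, and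
(ii) for any two words `w, w'` of the family, no nonempty proper suffix of `w` equals
a nonempty proper prefix of `w'`.  (For `i ≠ j` the words `w i` and `w j` must be
distinct, since any word is a factor of itself.) -/
def CombFreeFam {α I : Type*} (w : I → List α) : Prop :=
  (∀ i j : I, i ≠ j → ¬ w i <:+: w j) ∧
  (∀ i j : I, ∀ s : List α,
      s ≠ [] → s <:+ w i → s ≠ w i → s <+: w j → s ≠ w j → False)


namespace AnickAux
variable {d : ℕ}

/-- Base-(d+1) encoding of words (digits 1..d): strictly monotone for degree-lex. -/
def enc : List (Fin d) → ℕ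
  | [] => 0
  | a :: l => (a.val + 1) * (d+1)^l.length + enc l

lemma enc_nil : enc ([] : List (Fin d)) = 0 := rfl
lemma enc_cons (a : Fin d) (l : List (Fin d)) :
    enc (a :: l) = (a.val + 1) * (d+1)^l.length + enc l := rfl

lemma enc_lt (l : List (Fin d)) : enc l < (d+1)^l.length := by
  induction l with
  | nil => simp [enc]
  | cons a l ih =>
    have ha : a.val + 1 ≤ d := by have := a.isLt; omega
    calc enc (a :: l) = (a.val + 1) * (d+1)^l.length + enc l := rfl
      _ < (a.val + 1) * (d+1)^l.length + (d+1)^l.length := by omega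
      _ = (a.val + 2) * (d+1)^l.length := by ring
      _ ≤ (d+1) * (d+1)^l.length := Nat.mul_le_mul_right _ (by omega)
      _ = (d+1)^(l.length+1) := by ring
      _ = (d+1)^(a :: l).length := by simp

lemma enc_cons_ge (a : Fin d) (l : List (Fin d)) : (d+1)^l.length ≤ enc (a :: l) := by
  have : 1 * (d+1)^l.length ≤ (a.val + 1) * (d+1)^l.length :=
    Nat.mul_le_mul_right _ (by omega)
  simp only [enc_cons]; omega

lemma enc_lt_of_length_lt {u v : List (Fin d)} (h : u.length < v.length) : enc u < enc v := by
  cases v with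
  | nil => simp at h
  | cons b m =>
    have h1 : enc u < (d+1)^u.length := enc_lt u
    have h2 : (d+1)^u.length ≤ (d+1)^m.length :=
      Nat.pow_le_pow_right (by omega) (by simpa using Nat.lt_succ_iff.mp h)
    exact lt_of_lt_of_le (lt_of_lt_of_le h1 h2) (enc_cons_ge b m)

lemma enc_append (u v : List (Fin d)) :
    enc (u ++ v) = enc u * (d+1)^v.length + enc v := by
  induction u with
  | nil => simp [enc]
  | cons a l ih =>
    simp only [List.cons_append, enc_cons, List.length_append, ih, pow_add]
    ring

lemma enc_lt_of_lex {u v : List (Fin d)} (hlen : u.length = v.length)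
    (h : List.Lex (· < ·) u v) : enc u < enc v := by
  induction h with
  | nil => simp at hlen
  | @cons a l m h ih =>
    have hl : l.length = m.length := by simpa using hlen
    simp only [enc_cons, hl]
    exact Nat.add_lt_add_left (ih hl) _
  | @rel a l b m hab =>
    have hl : l.length = m.length := by simpa using hlen
    have h1 : enc (a :: l) < (a.val + 2) * (d+1)^l.length := by
      simp only [enc_cons]
      nlinarith [enc_lt l]
    have h2 : (a.val + 2) * (d+1)^l.length ≤ (b.val + 1) * (d+1)^m.length := by
      rw [hl]
      refine Nat.mul_le_mul_right _ ?_
      have : a.val < b.val := hab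
      omega
    have h3 : (b.val + 1) * (d+1)^m.length ≤ enc (b :: m) := by
      simp only [enc_cons]; omega
    omega

lemma enc_inj : ∀ u v : List (Fin d), enc u = enc v → u = v := by
  intro u
  induction u with
  | nil => intro v h; cases v with
    | nil => rfl
    | cons b m =>
      exfalso
      have := enc_cons_ge b m
      have h0 : (0:ℕ) < (d+1)^m.length := Nat.pow_pos (by omega)
      simp [enc_nil] at h; omega
  | cons a l ih =>
    intro v h
    cases v with
    | nil =>
      exfalso
      have := enc_cons_ge a l
      have h0 : (0:ℕ) < (d+1)^l.length := Nat.pow_pos (by omega)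
      simp [enc_nil] at h; omega
    | cons b m =>
      rcases lt_trichotomy (a :: l).length (b :: m).length with hl | hl | hl
      · exact absurd h (Nat.ne_of_lt (enc_lt_of_length_lt hl))
      · have hlm : l.length = m.length := by simpa using hl
        simp only [enc_cons, hlm] at h
        have h1 := enc_lt l
        have h2 := enc_lt m
        rw [hlm] at h1
        have hab : a.val = b.val := by nlinarith
        have hl2 : enc l = enc m := by
          have : (a.val+1) * (d+1)^m.length = (b.val+1)*(d+1)^m.length := by rw [hab]
          omega
        have := ih m hl2
        cases this
        exact congrArg (· :: l) (Fin.ext hab)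
      · exact absurd h.symm (Nat.ne_of_lt (enc_lt_of_length_lt hl))

lemma enc_sandwich_le {x y : List (Fin d)} (a b : List (Fin d)) (hlen : x.length = y.length)
    (h : enc x ≤ enc y) : enc (a ++ x ++ b) ≤ enc (a ++ y ++ b) := by
  simp only [List.append_assoc, enc_append, List.length_append, hlen]
  have : enc x * (d+1)^b.length ≤ enc y * (d+1)^b.length := Nat.mul_le_mul_right _ h
  omega

lemma enc_sandwich_lt {x y : List (Fin d)} (a b : List (Fin d)) (hlen : x.length = y.length)
    (h : enc x < enc y) : enc (a ++ x ++ b) < enc (a ++ y ++ b) := by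
  simp only [List.append_assoc, enc_append, List.length_append, hlen]
  have h0 : (0:ℕ) < (d+1)^b.length := Nat.pow_pos (by omega)
  have : enc x * (d+1)^b.length < enc y * (d+1)^b.length := by
    exact Nat.mul_lt_mul_of_lt_of_le h (le_refl _) h0
  omega

end AnickAux
-- combKey scratch
namespace AnickAux

variable {d : ℕ} {I : Type*}

lemma hat_list_inj (hat : I → Word d)
    (hcf : CombFreeFam fun i => FreeMonoid.toList (hat i))
    {i j : I} (h : FreeMonoid.toList (hat i) = FreeMonoid.toList (hat j)) : i = j := by
  by_contra hne
  refine hcf.1 i j hne ?_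
  show FreeMonoid.toList (hat i) <:+: FreeMonoid.toList (hat j)
  rw [h]

lemma combKey (hat : I → Word d)
    (hcf : CombFreeFam fun i => FreeMonoid.toList (hat i))
    {j₁ j₂ : I} {U₁ V₁ u v : List (Fin d)}
    (heq : U₁ ++ FreeMonoid.toList (hat j₁) ++ V₁ = u ++ FreeMonoid.toList (hat j₂) ++ v)
    (hle : U₁.length ≤ u.length)
    (hne : ¬(U₁ = u ∧ j₁ = j₂)) :
    ∃ s : List (Fin d), u = U₁ ++ FreeMonoid.toList (hat j₁) ++ s := by
  rw [List.append_assoc, List.append_assoc] at heq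
  rcases Nat.eq_or_lt_of_le hle with heqlen | hlt
  · -- equal positions
    obtain ⟨hU, h2⟩ := List.append_inj heq heqlen
    exfalso
    rcases lt_trichotomy (FreeMonoid.toList (hat j₁)).length (FreeMonoid.toList (hat j₂)).length with h | h | h
    · have hp : (FreeMonoid.toList (hat j₁)) <+: (FreeMonoid.toList (hat j₂)) :=
        List.prefix_of_prefix_length_le ⟨V₁, h2⟩ ⟨v, rfl⟩ (le_of_lt h)
      have hij : j₁ ≠ j₂ := fun he => by subst he; exact lt_irrefl _ h
      exact hcf.1 j₁ j₂ hij hp.isInfix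
    · have hA : (FreeMonoid.toList (hat j₁)) = (FreeMonoid.toList (hat j₂)) := (List.append_inj h2 h).1
      exact hne ⟨hU, hat_list_inj hat hcf hA⟩
    · have hp : (FreeMonoid.toList (hat j₂)) <+: (FreeMonoid.toList (hat j₁)) :=
        List.prefix_of_prefix_length_le ⟨v, h2.symm⟩ ⟨V₁, rfl⟩ (le_of_lt h)
      have hij : j₂ ≠ j₁ := fun he => by subst he; exact lt_irrefl _ h
      exact hcf.1 j₂ j₁ hij hp.isInfix
  · -- U₁ strictly shorter than u
    have hpu : U₁ <+: u :=
      List.prefix_of_prefix_length_le ⟨(FreeMonoid.toList (hat j₁)) ++ V₁, heq⟩ ⟨(FreeMonoid.toList (hat j₂)) ++ v, rfl⟩ (le_of_lt hlt)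
    obtain ⟨m, rfl⟩ := hpu
    have hm : m ≠ [] := by
      intro h0; rw [h0] at hlt; simp at hlt
    have h2 : (FreeMonoid.toList (hat j₁)) ++ V₁ = m ++ ((FreeMonoid.toList (hat j₂)) ++ v) := by
      apply List.append_cancel_left (as := U₁)
      rw [heq, List.append_assoc]
    by_cases hn : (FreeMonoid.toList (hat j₁)).length ≤ m.length
    · have hp : (FreeMonoid.toList (hat j₁)) <+: m :=
        List.prefix_of_prefix_length_le ⟨V₁, h2⟩ ⟨(FreeMonoid.toList (hat j₂)) ++ v, rfl⟩ hn
      obtain ⟨s, rfl⟩ := hp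
      exact ⟨s, by rw [List.append_assoc]⟩
    · exfalso
      push_neg at hn
      have hpm : m <+: (FreeMonoid.toList (hat j₁)) :=
        List.prefix_of_prefix_length_le ⟨(FreeMonoid.toList (hat j₂)) ++ v, h2.symm⟩ ⟨V₁, rfl⟩ (le_of_lt hn)
      obtain ⟨r, hr⟩ := hpm
      have hrlen : r.length = (FreeMonoid.toList (hat j₁)).length - m.length := by
        rw [← hr]; simp
      have hmpos : 0 < m.length := List.length_pos_iff.mpr hm
      have hrne : r ≠ [] := by
        intro h0
        rw [h0] at hrlen
        simp at hrlen
        omega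
      have hrneA1 : r ≠ (FreeMonoid.toList (hat j₁)) := by
        intro h0
        rw [h0] at hrlen
        omega
      have hrsuf : r <:+ (FreeMonoid.toList (hat j₁)) := ⟨m, hr⟩
      have h3 : r ++ V₁ = (FreeMonoid.toList (hat j₂)) ++ v := by
        apply List.append_cancel_left (as := m)
        rw [← List.append_assoc, hr, h2]
      rcases lt_trichotomy r.length (FreeMonoid.toList (hat j₂)).length with h4 | h4 | h4
      · have hrp : r <+: (FreeMonoid.toList (hat j₂)) :=
          List.prefix_of_prefix_length_le ⟨V₁, h3⟩ ⟨v, rfl⟩ (le_of_lt h4)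
        exact hcf.2 j₁ j₂ r hrne hrsuf hrneA1 hrp (fun h0 => by rw [h0] at h4; exact lt_irrefl _ h4)
      · have hrA2 : r = (FreeMonoid.toList (hat j₂)) :=
          (List.prefix_of_prefix_length_le ⟨V₁, h3⟩ ⟨v, rfl⟩ (le_of_eq h4)).eq_of_length h4
        have hij : j₂ ≠ j₁ := by
          intro he
          subst he
          exact hrneA1 hrA2
        exact hcf.1 j₂ j₁ hij (hrA2 ▸ hrsuf).isInfix
      · have hA2r : (FreeMonoid.toList (hat j₂)) <+: r :=
          List.prefix_of_prefix_length_le ⟨v, h3.symm⟩ ⟨V₁, rfl⟩ (le_of_lt h4)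
        have hij : j₂ ≠ j₁ := by
          intro he
          subst he
          have := hrsuf.length_le
          omega
        exact hcf.1 j₂ j₁ hij (hA2r.isInfix.trans hrsuf.isInfix)
      
end AnickAux
namespace AnickAux

variable {p d : ℕ} {I : Type*}

lemma word_toList_inj : Function.Injective (FreeMonoid.toList : Word d → List (Fin d)) :=
  FreeMonoid.toList.injective

lemma mid_inj (u v : Word d) : Function.Injective fun w : Word d => u * w * v := by
  intro x y h
  simp only [] at h
  apply word_toList_inj
  have h' := congrArg FreeMonoid.toList h
  simp only [FreeMonoid.toList_mul] at h'
  have h1 := List.append_cancel_right h'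
  exact List.append_cancel_left h1

/-- `single u 1 * Y * single v 1`. -/
def sandw (u v : Word d) (Y : FA p d) : FA p d :=
  MonoidAlgebra.single u 1 * Y * MonoidAlgebra.single v 1

lemma sandw_eq_mapDomain (u v : Word d) (Y : FA p d) :
    sandw u v Y = MonoidAlgebra.mapDomain (fun w => u * w * v) Y := by
  induction Y using MonoidAlgebra.induction_linear with
  | zero => simp [sandw]
  | add f g hf hg =>
    simp only [sandw] at hf hg ⊢
    rw [MonoidAlgebra.mapDomain_add, ← hf, ← hg]
    noncomm_ring
  | single a b =>
    rw [MonoidAlgebra.mapDomain_single]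
    show MonoidAlgebra.single u 1 * MonoidAlgebra.single a b * MonoidAlgebra.single v 1 = _
    rw [MonoidAlgebra.single_mul_single, MonoidAlgebra.single_mul_single]
    simp

lemma sandw_apply_mid (u v : Word d) (Y : FA p d) (w : Word d) :
    (sandw u v Y).coeff (u * w * v) = Y.coeff w := by
  rw [sandw_eq_mapDomain]
  exact Finsupp.mapDomain_apply (mid_inj u v) Y.coeff w

lemma sandw_apply_eq_zero (u v : Word d) (Y : FA p d) (x : Word d)
    (h : ∀ w, x ≠ u * w * v) : (sandw u v Y).coeff x = 0 := by
  rw [sandw_eq_mapDomain]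
  refine Finsupp.mapDomain_notin_range _ _ ?_
  rintro ⟨w, rfl⟩
  exact h w rfl

lemma sandw_support (u v : Word d) (Y : FA p d) :
    ∀ x ∈ (sandw u v Y).coeff.support, ∃ w ∈ Y.coeff.support, x = u * w * v := by
  intro x hx
  by_cases h : ∃ w, x = u * w * v
  · obtain ⟨w, rfl⟩ := h
    refine ⟨w, ?_, rfl⟩
    rw [Finsupp.mem_support_iff] at hx ⊢
    rwa [sandw_apply_mid] at hx
  · push_neg at h
    rw [Finsupp.mem_support_iff] at hx
    exact absurd (sandw_apply_eq_zero u v Y x h) hx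

lemma sandw_expand (u v : Word d) (Y : FA p d) :
    sandw u v Y = ∑ w ∈ Y.coeff.support, Y.coeff w • MonoidAlgebra.single (u*w*v) (1:ZMod p) := by
  rw [sandw_eq_mapDomain, MonoidAlgebra.mapDomain, Finsupp.mapDomain]
  rw [Finsupp.sum, MonoidAlgebra.ofCoeff_sum]
  congr 1
  funext w
  rw [MonoidAlgebra.smul_single']
  simp

lemma sandw_smul (u v : Word d) (c : ZMod p) (Y : FA p d) :
    sandw u v (c • Y) = c • sandw u v Y := by
  simp only [sandw]
  rw [mul_smul_comm, smul_mul_assoc]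

lemma sandw_single (u v w : Word d) (c : ZMod p) :
    sandw u v (MonoidAlgebra.single w c) = MonoidAlgebra.single (u*w*v) c := by
  simp only [sandw]
  rw [MonoidAlgebra.single_mul_single, MonoidAlgebra.single_mul_single]
  simp

lemma sandw_add (u v : Word d) (Y Y' : FA p d) :
    sandw u v (Y + Y') = sandw u v Y + sandw u v Y' := by
  simp only [sandw]
  noncomm_ring

lemma sandw_sub (u v : Word d) (Y Y' : FA p d) :
    sandw u v (Y - Y') = sandw u v Y - sandw u v Y' := by
  simp only [sandw]
  noncomm_ring

lemma support_len_of_homComponent {x : FA p d} {n : ℕ} (h : x ∈ homComponent p d n) :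
    ∀ w ∈ x.coeff.support, (FreeMonoid.toList w).length = n := by
  classical
  refine Submodule.span_induction (p := fun x _ => ∀ w ∈ x.coeff.support, (FreeMonoid.toList w).length = n)
    ?_ ?_ ?_ ?_ h
  · rintro x ⟨w, hw, rfl⟩ w' hw'
    have := Finsupp.support_single_subset hw'
    simp only [Finset.mem_singleton] at this
    subst this; exact hw
  · simp
  · intro a b _ _ ha hb w hw
    rcases Finset.mem_union.mp (Finsupp.support_add hw) with h' | h'
    · exact ha w h'
    · exact hb w h'
  · intro c a _ ha w hw
    exact ha w (Finsupp.support_smul hw)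

lemma mem_twoSidedSpan_of_sandw (Z : I → FA p d) (u v : Word d) (j : I) :
    sandw u v (Z j) ∈ twoSidedSpan p d {x | ∃ i : I, x = Z i} :=
  Submodule.subset_span ⟨MonoidAlgebra.single u 1, Z j, MonoidAlgebra.single v 1, ⟨j, rfl⟩, rfl⟩

end AnickAux
namespace AnickAux

/-- A formal term `c • (u · Z_j · v)`. -/
structure Trm (p d : ℕ) (I : Type*) where
  c : ZMod p
  u : Word d
  j : I
  v : Word d

variable {p d : ℕ} {I : Type*}

def tval (Z : I → FA p d) (t : Trm p d I) : FA p d := t.c • sandw t.u t.v (Z t.j)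

def twd (hat : I → Word d) (t : Trm p d I) : Word d := t.u * hat t.j * t.v

def tmeas (hat : I → Word d) (t : Trm p d I) : ℕ := enc (FreeMonoid.toList (twd hat t))

open Classical in
def pterm (i : I) (t : Trm p d I) : FA p d :=
  if t.j = i ∧ t.v = 1 then t.c • MonoidAlgebra.single t.u (1 : ZMod p) else 0

section ListHelpers

variable {α β : Type*} {M : Type*} [AddCommMonoid M]

lemma sum_map_flatMap (g : α → List β) (f : β → M) (L : List α) :
    ((L.flatMap g).map f).sum = (L.map fun a => ((g a).map f).sum).sum := by
  induction L with
  | nil => simp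
  | cons a L ih => simp [List.flatMap_cons, ih]

lemma sub_sum_mem {R M : Type*} [Ring R] [AddCommGroup M] [Module R M]
    (N : Submodule R M) (f h : α → M) (L : List α)
    (hm : ∀ a ∈ L, f a - h a ∈ N) :
    (L.map f).sum - (L.map h).sum ∈ N := by
  induction L with
  | nil => simpa using N.zero_mem
  | cons a L ih =>
    have h1 := hm a (List.mem_cons_self)
    have h2 := ih fun b hb => hm b (List.mem_cons_of_mem a hb)
    have : (List.map f (a :: L)).sum - (List.map h (a :: L)).sum
        = (f a - h a) + ((L.map f).sum - (L.map h).sum) := by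
      simp [List.map_cons]; abel
    rw [this]
    exact N.add_mem h1 h2

lemma sum_map_ite_filter (P : α → Prop) [DecidablePred P] (f : α → M) (L : List α) :
    (L.map fun a => if P a then f a else 0).sum
      = ((L.filter fun a => decide (P a)).map f).sum := by
  induction L with
  | nil => simp
  | cons a L ih =>
    by_cases h : P a
    · simp [List.filter_cons, h, ih]
    · simp [List.filter_cons, h, ih]

lemma sum_map_filter_split (P : α → Bool) (f : α → M) (L : List α) :
    (L.map f).sum = ((L.filter P).map f).sum + ((L.filter fun a => ! P a).map f).sum := by
  induction L with
  | nil => simp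
  | cons a L ih =>
    by_cases h : P a
    · simp [List.filter_cons, h, ih]; abel
    · simp [List.filter_cons, h, ih]; abel

lemma le_foldr_max (f : α → ℕ) (L : List α) : ∀ t ∈ L, f t ≤ (L.map f).foldr max 0 := by
  induction L with
  | nil => simp
  | cons a L ih =>
    intro t ht
    rcases List.mem_cons.mp ht with rfl | ht
    · simp [le_max_iff]
    · simp only [List.map_cons, List.foldr_cons]
      exact le_max_of_le_right (ih t ht)

lemma sum_map_smul_const {R M : Type*} [Semiring R] [AddCommMonoid M] [Module R M]
    (f : α → M) (c : α → R) (x : M) (L : List α)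
    (h : ∀ a ∈ L, f a = c a • x) :
    (L.map f).sum = ((L.map c).sum) • x := by
  induction L with
  | nil => simp
  | cons a L ih =>
    simp only [List.map_cons, List.sum_cons, add_smul]
    rw [h a (List.mem_cons_self), ih fun b hb => h b (List.mem_cons_of_mem a hb)]

lemma sum_map_mul_const {R : Type*} [Semiring R] (f : α → R) (μ : R) (L : List α) :
    (L.map fun a => f a * μ).sum = (L.map f).sum * μ := by
  induction L with
  | nil => simp
  | cons a L ih => simp [ih, add_mul]

end ListHelpers

lemma expandR (Y W : FA p d) (a s v : Word d) :
    ∑ w ∈ W.coeff.support, W.coeff w • sandw a (s * w * v) Y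
      = MonoidAlgebra.single a 1 * Y * MonoidAlgebra.single s 1 * W * MonoidAlgebra.single v 1 := by
  have h1 : MonoidAlgebra.single a (1:ZMod p) * Y * MonoidAlgebra.single s 1 * W * MonoidAlgebra.single v 1
      = (MonoidAlgebra.single a 1 * Y) * (MonoidAlgebra.single s 1 * W * MonoidAlgebra.single v 1) := by
    noncomm_ring
  rw [h1, show MonoidAlgebra.single s (1:ZMod p) * W * MonoidAlgebra.single v 1 = sandw s v W from rfl,
    sandw_expand, Finset.mul_sum]
  refine Finset.sum_congr rfl fun w hw => ?_
  rw [mul_smul_comm]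
  rfl

lemma expandL (Y W : FA p d) (a s v : Word d) :
    ∑ w ∈ W.coeff.support, W.coeff w • sandw (a * w * s) v Y
      = MonoidAlgebra.single a 1 * W * MonoidAlgebra.single s 1 * Y * MonoidAlgebra.single v 1 := by
  have h1 : MonoidAlgebra.single a (1:ZMod p) * W * MonoidAlgebra.single s 1 * Y * MonoidAlgebra.single v 1
      = (sandw a s W) * (Y * MonoidAlgebra.single v 1) := by
    show _ = (MonoidAlgebra.single a 1 * W * MonoidAlgebra.single s 1) * (Y * MonoidAlgebra.single v 1)
    noncomm_ring
  rw [h1, sandw_expand, Finset.sum_mul]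
  refine Finset.sum_congr rfl fun w hw => ?_
  rw [smul_mul_assoc]
  congr 1
  show MonoidAlgebra.single (a*w*s) 1 * Y * MonoidAlgebra.single v 1 = _
  rw [mul_assoc]

end AnickAux
namespace AnickAux
variable {p d : ℕ} {I : Type*}

lemma word_left_cancel (a : Word d) {x y : Word d} (h : a * x = a * y) : x = y := by
  apply word_toList_inj
  have h' := congrArg FreeMonoid.toList h
  simp only [FreeMonoid.toList_mul] at h'
  exact List.append_cancel_left h'

lemma enc_mono_mid_le (a b : Word d) {x y : Word d}
    (hlen : (FreeMonoid.toList x).length = (FreeMonoid.toList y).length)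
    (h : enc (FreeMonoid.toList x) ≤ enc (FreeMonoid.toList y)) :
    enc (FreeMonoid.toList (a * x * b)) ≤ enc (FreeMonoid.toList (a * y * b)) := by
  simp only [FreeMonoid.toList_mul]
  exact enc_sandwich_le _ _ hlen h

lemma enc_mono_mid_lt (a b : Word d) {x y : Word d}
    (hlen : (FreeMonoid.toList x).length = (FreeMonoid.toList y).length)
    (h : enc (FreeMonoid.toList x) < enc (FreeMonoid.toList y)) :
    enc (FreeMonoid.toList (a * x * b)) < enc (FreeMonoid.toList (a * y * b)) := by
  simp only [FreeMonoid.toList_mul]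
  exact enc_sandwich_lt _ _ hlen h

end AnickAux
namespace AnickAux

variable {p d : ℕ} {I : Type*}

theorem mainM [Fact (Nat.Prime p)] (Z : I → FA p d) (ndeg : I → ℕ) (hat : I → Word d)
    (hdeg : ∀ i, 1 ≤ ndeg i)
    (hlen : ∀ i, ∀ w ∈ (Z i).coeff.support, (FreeMonoid.toList w).length = ndeg i)
    (hhat : ∀ i, IsHighestTerm p d (Z i) (hat i))
    (hcf : CombFreeFam fun i => FreeMonoid.toList (hat i)) :
    ∀ k : ℕ, ∀ L : List (Trm p d I),
      (∀ t ∈ L, t.c ≠ 0 → tmeas hat t < k) →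
      (L.map (tval Z)).sum = 0 →
      ∀ i : I, (L.map (pterm i)).sum ∈ twoSidedSpan p d {x | ∃ i : I, x = Z i} := by
  intro k
  induction k using Nat.strong_induction_on with
  | _ k IH =>
  intro L hbound hsum i
  classical
  set C := twoSidedSpan p d {x | ∃ i : I, x = Z i} with hC
  -- general facts
  have hsuppne : ∀ (j : I) (w : Word d), w ∈ (Z j).coeff.support → w ≠ 1 := by
    intro j w hw h1
    have hl := hlen j w hw
    rw [h1, FreeMonoid.toList_one] at hl
    have := hdeg j
    simp at hl
    omega
  have hhatlen : ∀ j : I, (FreeMonoid.toList (hat j)).length = ndeg j :=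
    fun j => hlen j _ (hhat j).1
  have henc_le : ∀ (j : I) (w : Word d), w ∈ (Z j).coeff.support →
      enc (FreeMonoid.toList w) ≤ enc (FreeMonoid.toList (hat j)) := by
    intro j w hw
    by_cases h : w = hat j
    · rw [h]
    · exact le_of_lt (enc_lt_of_lex (by rw [hlen j w hw, hhatlen j]) ((hhat j).2 w hw h))
  have henc_lt : ∀ (j : I) (w : Word d), w ∈ (Z j).coeff.support → w ≠ hat j →
      enc (FreeMonoid.toList w) < enc (FreeMonoid.toList (hat j)) := by
    intro j w hw h
    exact enc_lt_of_lex (by rw [hlen j w hw, hhatlen j]) ((hhat j).2 w hw h)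
  by_cases hW : ∀ t ∈ L, t.c = 0
  · have hz : ∀ x ∈ L.map (pterm i), x = 0 := by
      intro x hx
      obtain ⟨t, ht, rfl⟩ := List.mem_map.mp hx
      unfold pterm
      split
      · rw [hW t ht, zero_smul]
      · rfl
    rw [List.sum_eq_zero hz]
    exact C.zero_mem
  · push_neg at hW
    obtain ⟨tw, htwL, htwc⟩ := hW
    set S : Finset (Trm p d I) := (L.filter (fun t => decide (t.c ≠ 0))).toFinset with hS
    have hSmem : ∀ t : Trm p d I, t ∈ S ↔ (t ∈ L ∧ t.c ≠ 0) := by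
      intro t
      simp [hS, List.mem_toFinset, List.mem_filter]
    have hSne : S.Nonempty := ⟨tw, (hSmem tw).mpr ⟨htwL, htwc⟩⟩
    obtain ⟨t₁, ht₁, hmax⟩ := S.exists_max_image (tmeas hat) hSne
    set M := tmeas hat t₁ with hM
    have hTne : (S.filter (fun t => tmeas hat t = M)).Nonempty :=
      ⟨t₁, Finset.mem_filter.mpr ⟨ht₁, rfl⟩⟩
    obtain ⟨t₀, ht₀T, hmin⟩ := (S.filter (fun t => tmeas hat t = M)).exists_min_image
      (fun t => (FreeMonoid.toList t.u).length) hTne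
    have ht₀S : t₀ ∈ S := (Finset.mem_filter.mp ht₀T).1
    have hmeas₀ : tmeas hat t₀ = M := (Finset.mem_filter.mp ht₀T).2
    have ht₀L : t₀ ∈ L := ((hSmem t₀).mp ht₀S).1
    have hc₀ : t₀.c ≠ 0 := ((hSmem t₀).mp ht₀S).2
    have hMk : M < k := hmeas₀ ▸ hbound t₀ ht₀L hc₀
    set μ : ZMod p := (Z t₀.j).coeff (hat t₀.j) with hμdef
    have hμ : μ ≠ 0 := Finsupp.mem_support_iff.mp (hhat t₀.j).1
    set Z' : FA p d := Z t₀.j - μ • MonoidAlgebra.single (hat t₀.j) 1 with hZ'def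
    have hZ'hat : Z'.coeff (hat t₀.j) = 0 := by
      rw [hZ'def]
      rw [MonoidAlgebra.coeff_sub, Finsupp.sub_apply, MonoidAlgebra.coeff_smul, Finsupp.smul_apply]
      rw [MonoidAlgebra.single_apply, if_pos rfl]
      simp [hμdef]
    have hZ'ne : ∀ w : Word d, w ≠ hat t₀.j → Z'.coeff w = (Z t₀.j).coeff w := by
      intro w hw
      rw [hZ'def, MonoidAlgebra.coeff_sub, Finsupp.sub_apply, MonoidAlgebra.coeff_smul, Finsupp.smul_apply, MonoidAlgebra.single_apply,
        if_neg (fun h => hw h.symm)]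
      simp
    have hZ'supp : ∀ w ∈ Z'.coeff.support, w ∈ (Z t₀.j).coeff.support ∧ w ≠ hat t₀.j := by
      intro w hw
      rw [Finsupp.mem_support_iff] at hw
      by_cases h : w = hat t₀.j
      · exact absurd (h ▸ hZ'hat) hw
      · exact ⟨Finsupp.mem_support_iff.mpr (by rw [← hZ'ne w h]; exact hw), h⟩
    have hZrec : Z t₀.j - Z' = μ • MonoidAlgebra.single (hat t₀.j) 1 := by
      rw [hZ'def]; abel
    have hmaxL : ∀ t ∈ L, t.c ≠ 0 → tmeas hat t ≤ M :=
      fun t h1 h2 => hmax t ((hSmem t).mpr ⟨h1, h2⟩)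
    have hminL : ∀ t ∈ L, t.c ≠ 0 → tmeas hat t = M →
        (FreeMonoid.toList t₀.u).length ≤ (FreeMonoid.toList t.u).length :=
      fun t h1 h2 h3 => hmin t (Finset.mem_filter.mpr ⟨(hSmem t).mpr ⟨h1, h2⟩, h3⟩)
    have hword : ∀ t : Trm p d I, tmeas hat t = M → twd hat t = twd hat t₀ := by
      intro t ht
      apply word_toList_inj
      apply enc_inj
      exact ht.trans hmeas₀.symm
    set isT : Trm p d I → Prop := fun t => t.u = t₀.u ∧ t.j = t₀.j ∧ t.v = t₀.v with hisT
    -- the key per-term rewriting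
    have key : ∀ t ∈ L, ∃ Lt : List (Trm p d I),
        ((Lt.map (tval Z)).sum = tval Z t) ∧
        (∀ i' : I, pterm i' t - (Lt.map (pterm i')).sum ∈ C) ∧
        (∀ t' ∈ Lt, t'.c ≠ 0 → tmeas hat t' < M ∨ isT t') := by
      intro t ht
      by_cases h0 : t.c = 0
      · exact ⟨[t], by simp, fun i' => by simp [C.zero_mem], fun t' ht' hc' => by
          rw [List.mem_singleton.mp ht'] at hc'; exact absurd h0 hc'⟩
      by_cases h1 : isT t
      · exact ⟨[t], by simp, fun i' => by simp [C.zero_mem], fun t' ht' hc' => by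
          rw [List.mem_singleton.mp ht']; exact Or.inr h1⟩
      by_cases h2 : tmeas hat t < M
      · exact ⟨[t], by simp, fun i' => by simp [C.zero_mem], fun t' ht' hc' => by
          rw [List.mem_singleton.mp ht']; exact Or.inl h2⟩
      -- main case
      have htM : tmeas hat t = M := le_antisymm (hmaxL t ht h0) (not_lt.mp h2)
      have hweq : twd hat t = twd hat t₀ := hword t htM
      obtain ⟨s, hus⟩ : ∃ s : Word d, t.u = t₀.u * hat t₀.j * s := by
        have heqL : FreeMonoid.toList t₀.u ++ FreeMonoid.toList (hat t₀.j) ++ FreeMonoid.toList t₀.v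
            = FreeMonoid.toList t.u ++ FreeMonoid.toList (hat t.j) ++ FreeMonoid.toList t.v := by
          have := congrArg FreeMonoid.toList hweq.symm
          simpa [twd, FreeMonoid.toList_mul] using this
        have hne : ¬(FreeMonoid.toList t₀.u = FreeMonoid.toList t.u ∧ t₀.j = t.j) := by
          rintro ⟨hu, hj⟩
          apply h1
          have hu' : t.u = t₀.u := (word_toList_inj hu).symm
          refine ⟨hu', hj.symm, ?_⟩
          have : t.u * hat t.j * t.v = t.u * hat t.j * t₀.v := by
            have h' : twd hat t = t.u * hat t.j * t₀.v := by
              rw [hweq, twd, hu', hj]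
            rw [← h']; rfl
          exact word_left_cancel (t.u * hat t.j) this
        obtain ⟨s, hs⟩ := combKey hat hcf heqL (hminL t ht h0 htM) hne
        refine ⟨FreeMonoid.ofList s, ?_⟩
        apply word_toList_inj
        simp only [FreeMonoid.toList_mul, FreeMonoid.toList_ofList]
        exact hs
      refine ⟨((Z t.j).coeff.support.toList.map fun w =>
          ⟨t.c * μ⁻¹ * ((Z t.j).coeff w), t₀.u, t₀.j, s * w * t.v⟩)
        ++ (Z'.coeff.support.toList.map fun w' =>
          ⟨-(t.c * μ⁻¹ * (Z'.coeff w')), t₀.u * w' * s, t.j, t.v⟩), ?_, ?_, ?_⟩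
      · -- value preservation
        rw [List.map_append, List.sum_append, List.map_map, List.map_map,
          Finset.sum_map_toList, Finset.sum_map_toList]
        simp only [Function.comp_def]
        have hA : ∑ w ∈ (Z t.j).coeff.support,
            tval Z ⟨t.c * μ⁻¹ * ((Z t.j).coeff w), t₀.u, t₀.j, s * w * t.v⟩
            = (t.c * μ⁻¹) • (MonoidAlgebra.single t₀.u 1 * Z t₀.j * MonoidAlgebra.single s 1
                * Z t.j * MonoidAlgebra.single t.v 1) := by
          rw [← expandR (Z t₀.j) (Z t.j) t₀.u s t.v, Finset.smul_sum]
          refine Finset.sum_congr rfl fun w hw => ?_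
          show (t.c * μ⁻¹ * ((Z t.j).coeff w)) • sandw t₀.u (s*w*t.v) (Z t₀.j) = _
          rw [smul_smul]
        have hB : ∑ w' ∈ Z'.coeff.support,
            tval Z ⟨-(t.c * μ⁻¹ * (Z'.coeff w')), t₀.u * w' * s, t.j, t.v⟩
            = -((t.c * μ⁻¹) • (MonoidAlgebra.single t₀.u 1 * Z' * MonoidAlgebra.single s 1
                * Z t.j * MonoidAlgebra.single t.v 1)) := by
          rw [← expandL (Z t.j) Z' t₀.u s t.v, Finset.smul_sum, ← Finset.sum_neg_distrib]
          refine Finset.sum_congr rfl fun w' hw' => ?_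
          show (-(t.c * μ⁻¹ * (Z'.coeff w'))) • sandw (t₀.u * w' * s) t.v (Z t.j) = _
          rw [neg_smul, smul_smul]
        rw [hA, hB]
        rw [← smul_neg, ← smul_add, ← sub_eq_add_neg]
        have hX : MonoidAlgebra.single t₀.u (1:ZMod p) * Z t₀.j * MonoidAlgebra.single s 1
              * Z t.j * MonoidAlgebra.single t.v 1
            - MonoidAlgebra.single t₀.u 1 * Z' * MonoidAlgebra.single s 1
              * Z t.j * MonoidAlgebra.single t.v 1
            = μ • (MonoidAlgebra.single t.u 1 * Z t.j * MonoidAlgebra.single t.v 1) := by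
          have h4 : MonoidAlgebra.single t₀.u (1:ZMod p) * Z t₀.j * MonoidAlgebra.single s 1
                * Z t.j * MonoidAlgebra.single t.v 1
              - MonoidAlgebra.single t₀.u 1 * Z' * MonoidAlgebra.single s 1
                * Z t.j * MonoidAlgebra.single t.v 1
              = MonoidAlgebra.single t₀.u 1 * (Z t₀.j - Z') * MonoidAlgebra.single s 1
                * Z t.j * MonoidAlgebra.single t.v 1 := by
            noncomm_ring
          rw [h4, hZrec, mul_smul_comm, smul_mul_assoc, smul_mul_assoc, smul_mul_assoc]
          congr 2
          rw [MonoidAlgebra.single_mul_single, one_mul, MonoidAlgebra.single_mul_single,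
            one_mul, hus]
        rw [hX, smul_smul, mul_assoc, inv_mul_cancel₀ hμ, mul_one]
        rfl
      · -- pterm difference lands in C
        intro i'
        rw [List.map_append, List.sum_append, List.map_map, List.map_map,
          Finset.sum_map_toList, Finset.sum_map_toList]
        simp only [Function.comp_def]
        have hb1 : ∑ w ∈ (Z t.j).coeff.support,
            pterm i' (⟨t.c * μ⁻¹ * ((Z t.j).coeff w), t₀.u, t₀.j, s * w * t.v⟩ : Trm p d I) = 0 := by
          refine Finset.sum_eq_zero fun w hw => ?_
          unfold pterm
          rw [if_neg]
          rintro ⟨-, hv1⟩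
          apply hsuppne t.j w hw
          have h5 := congrArg FreeMonoid.toList hv1
          simp only [FreeMonoid.toList_mul, FreeMonoid.toList_one,
            List.append_eq_nil_iff] at h5
          apply word_toList_inj
          rw [FreeMonoid.toList_one, h5.1.2]
        rw [hb1, zero_add]
        by_cases hcond : t.j = i' ∧ t.v = 1
        · have hb2 : ∑ w' ∈ Z'.coeff.support,
              pterm i' (⟨-(t.c * μ⁻¹ * (Z'.coeff w')), t₀.u * w' * s, t.j, t.v⟩ : Trm p d I)
              = -((t.c * μ⁻¹) • sandw t₀.u s Z') := by
            rw [sandw_expand, Finset.smul_sum, ← Finset.sum_neg_distrib]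
            refine Finset.sum_congr rfl fun w' hw' => ?_
            unfold pterm
            rw [if_pos hcond, neg_smul, smul_smul]
          rw [hb2]
          have hp : pterm i' t = t.c • MonoidAlgebra.single t.u (1:ZMod p) := by
            unfold pterm; rw [if_pos hcond]
          rw [hp, sub_neg_eq_add]
          have hgoal : t.c • MonoidAlgebra.single t.u (1:ZMod p)
              + (t.c * μ⁻¹) • sandw t₀.u s Z'
              = (t.c * μ⁻¹) • sandw t₀.u s (Z t₀.j) := by
            have h6 : Z t₀.j = μ • MonoidAlgebra.single (hat t₀.j) 1 + Z' := by
              rw [← hZrec]; abel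
            rw [h6, sandw_add, sandw_smul, sandw_single, smul_add, smul_smul,
              mul_assoc, inv_mul_cancel₀ hμ, mul_one, ← hus]
          rw [hgoal]
          exact C.smul_mem _ (mem_twoSidedSpan_of_sandw Z t₀.u s t₀.j)
        · have hb2 : ∑ w' ∈ Z'.coeff.support,
              pterm i' (⟨-(t.c * μ⁻¹ * (Z'.coeff w')), t₀.u * w' * s, t.j, t.v⟩ : Trm p d I) = 0 := by
            refine Finset.sum_eq_zero fun w' hw' => ?_
            unfold pterm
            rw [if_neg hcond]
          have hp : pterm i' t = 0 := by unfold pterm; rw [if_neg hcond]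
          rw [hb2, hp, sub_zero]
          exact C.zero_mem
      · -- measures
        intro t' ht' hc'
        rcases List.mem_append.mp ht' with hmem | hmem
        · obtain ⟨w, hw, rfl⟩ := List.mem_map.mp hmem
          have hwsupp : w ∈ (Z t.j).coeff.support := Finset.mem_toList.mp hw
          by_cases hwhat : w = hat t.j
          · right
            refine ⟨rfl, rfl, ?_⟩
            show s * w * t.v = t₀.v
            have h7 : t₀.u * hat t₀.j * (s * w * t.v) = t₀.u * hat t₀.j * t₀.v := by
              have h8 : t₀.u * hat t₀.j * (s * w * t.v) = twd hat t := by
                rw [twd, hus, hwhat]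
                simp only [mul_assoc]
              rw [h8, hweq]; rfl
            exact word_left_cancel _ h7
          · left
            show tmeas hat ⟨t.c * μ⁻¹ * ((Z t.j).coeff w), t₀.u, t₀.j, s * w * t.v⟩ < M
            have h9 : twd hat (⟨t.c * μ⁻¹ * ((Z t.j).coeff w), t₀.u, t₀.j, s * w * t.v⟩ : Trm p d I)
                = (t₀.u * hat t₀.j * s) * w * t.v := by
              rw [twd]
              simp only [mul_assoc]
            have h10 : twd hat t = (t₀.u * hat t₀.j * s) * hat t.j * t.v := by
              rw [twd, hus]
            have hlt : tmeas hat ⟨t.c * μ⁻¹ * ((Z t.j).coeff w), t₀.u, t₀.j, s * w * t.v⟩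
                < tmeas hat t := by
              unfold tmeas
              rw [h9, h10]
              exact enc_mono_mid_lt _ _ (by rw [hlen t.j w hwsupp, hhatlen t.j])
                (henc_lt t.j w hwsupp hwhat)
            omega
        · obtain ⟨w', hw', rfl⟩ := List.mem_map.mp hmem
          obtain ⟨hw'supp, hw'ne⟩ := hZ'supp w' (Finset.mem_toList.mp hw')
          left
          show tmeas hat ⟨-(t.c * μ⁻¹ * (Z'.coeff w')), t₀.u * w' * s, t.j, t.v⟩ < M
          have h9 : twd hat (⟨-(t.c * μ⁻¹ * (Z'.coeff w')), t₀.u * w' * s, t.j, t.v⟩ : Trm p d I)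
              = t₀.u * w' * (s * hat t.j * t.v) := by
            rw [twd]
            simp only [mul_assoc]
          have h10 : twd hat t = t₀.u * hat t₀.j * (s * hat t.j * t.v) := by
            rw [twd, hus]
            simp only [mul_assoc]
          have hlt : tmeas hat ⟨-(t.c * μ⁻¹ * (Z'.coeff w')), t₀.u * w' * s, t.j, t.v⟩
              < tmeas hat t := by
            unfold tmeas
            rw [h9, h10]
            exact enc_mono_mid_lt _ _ (by rw [hlen t₀.j w' hw'supp, hhatlen t₀.j])
              (henc_lt t₀.j w' hw'supp hw'ne)
          omega
    -- assemble the rewritten list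
    set L₁ : List (Trm p d I) := L.attach.flatMap (fun x => (key x.1 x.2).choose) with hL₁
    have hsum1 : (L₁.map (tval Z)).sum = 0 := by
      rw [hL₁, sum_map_flatMap]
      rw [List.map_congr_left (fun x hx => (key x.1 x.2).choose_spec.1)]
      rw [List.attach_map_val]
      exact hsum
    have hdiff : (L.map (pterm i)).sum - (L₁.map (pterm i)).sum ∈ C := by
      rw [hL₁, sum_map_flatMap]
      have hL : (L.map (pterm i)).sum = (L.attach.map fun x => pterm i x.1).sum := by
        rw [List.attach_map_val]
      rw [hL]
      exact sub_sum_mem C _ _ L.attach fun x hx => (key x.1 x.2).choose_spec.2.1 i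
    have hboundL₁ : ∀ t' ∈ L₁, t'.c ≠ 0 → tmeas hat t' < M ∨ isT t' := by
      intro t' ht' hc'
      rw [hL₁] at ht'
      obtain ⟨x, hx, hmem⟩ := List.mem_flatMap.mp ht'
      exact (key x.1 x.2).choose_spec.2.2 t' hmem hc'
    -- coefficient of the leading word
    have hφt : ∀ t' ∈ L₁, (tval Z t').coeff (twd hat t₀) = (if isT t' then t'.c * μ else 0) := by
      intro t' ht'
      by_cases hT : isT t'
      · rw [if_pos hT]
        obtain ⟨hu, hj, hv⟩ := hT
        show (t'.c • sandw t'.u t'.v (Z t'.j)).coeff (twd hat t₀) = _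
        rw [MonoidAlgebra.coeff_smul_apply, hu, hj, hv]
        rw [show twd hat t₀ = t₀.u * hat t₀.j * t₀.v from rfl, sandw_apply_mid]
        rw [smul_eq_mul, hμdef]
      · rw [if_neg hT]
        by_cases hc' : t'.c = 0
        · show (t'.c • sandw t'.u t'.v (Z t'.j)).coeff (twd hat t₀) = 0
          rw [MonoidAlgebra.coeff_smul_apply, hc', zero_smul]
        have hm : tmeas hat t' < M := (hboundL₁ t' ht' hc').resolve_right hT
        show (t'.c • sandw t'.u t'.v (Z t'.j)).coeff (twd hat t₀) = 0
        rw [MonoidAlgebra.coeff_smul_apply]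
        suffices h : (sandw t'.u t'.v (Z t'.j)).coeff (twd hat t₀) = 0 by rw [h, smul_zero]
        by_cases hr : ∃ w : Word d, twd hat t₀ = t'.u * w * t'.v
        · obtain ⟨w, hw⟩ := hr
          rw [hw, sandw_apply_mid]
          by_contra hne0
          have hwsupp : w ∈ (Z t'.j).coeff.support := Finsupp.mem_support_iff.mpr hne0
          have hle1 : enc (FreeMonoid.toList (t'.u * w * t'.v))
              ≤ enc (FreeMonoid.toList (t'.u * hat t'.j * t'.v)) :=
            enc_mono_mid_le _ _ (by rw [hlen t'.j w hwsupp, hhatlen t'.j])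
              (henc_le t'.j w hwsupp)
          have hM1 : enc (FreeMonoid.toList (twd hat t₀)) = M := hmeas₀
          rw [hw] at hM1
          have : tmeas hat t' = enc (FreeMonoid.toList (t'.u * hat t'.j * t'.v)) := rfl
          omega
        · push_neg at hr
          exact sandw_apply_eq_zero _ _ _ _ hr
    have hcoef : (L₁.map fun t' => if isT t' then t'.c * μ else 0).sum = 0 := by
      rw [← List.map_congr_left hφt]
      have h1 := congrArg ((Finsupp.applyAddHom (twd hat t₀)).comp
        (MonoidAlgebra.coeffAddEquiv : FA p d ≃+ _).toAddMonoidHom) hsum1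
      rw [map_list_sum, List.map_map] at h1
      exact h1
    rw [sum_map_ite_filter] at hcoef
    have hσμ : ((L₁.filter fun t' => decide (isT t')).map (fun t' => t'.c)).sum * μ = 0 := by
      rw [← sum_map_mul_const]
      exact hcoef
    have hσ0 : ((L₁.filter fun t' => decide (isT t')).map (fun t' => t'.c)).sum = 0 :=
      (mul_eq_zero.mp hσμ).resolve_right hμ
    -- split off the leading-triple terms
    set L₂ : List (Trm p d I) := L₁.filter (fun t' => ! decide (isT t')) with hL₂
    have htripval : ((L₁.filter fun t' => decide (isT t')).map (tval Z)).sum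
        = ((L₁.filter fun t' => decide (isT t')).map (fun t' => t'.c)).sum
          • sandw t₀.u t₀.v (Z t₀.j) := by
      refine sum_map_smul_const _ _ _ _ fun t' ht' => ?_
      have hT : isT t' := by
        have := (List.mem_filter.mp ht').2
        exact of_decide_eq_true this
      obtain ⟨hu, hj, hv⟩ := hT
      rw [tval, hu, hj, hv]
    have hsum2 : (L₂.map (tval Z)).sum = 0 := by
      have hsplit := sum_map_filter_split (fun t' => decide (isT t')) (tval Z) L₁
      rw [hsum1, htripval, hσ0, zero_smul, zero_add] at hsplit
      rw [hL₂]
      exact hsplit.symm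
    have hpA2 : (L₂.map (pterm i)).sum = (L₁.map (pterm i)).sum := by
      have htripp : ((L₁.filter fun t' => decide (isT t')).map (pterm i)).sum
          = ((L₁.filter fun t' => decide (isT t')).map (fun t' => t'.c)).sum
            • (if t₀.j = i ∧ t₀.v = 1 then MonoidAlgebra.single t₀.u (1:ZMod p) else 0) := by
        refine sum_map_smul_const _ _ _ _ fun t' ht' => ?_
        have hT : isT t' := by
          have := (List.mem_filter.mp ht').2
          exact of_decide_eq_true this
        obtain ⟨hu, hj, hv⟩ := hT
        unfold pterm
        rw [hu, hj, hv]
        by_cases hcond : t₀.j = i ∧ t₀.v = 1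
        · rw [if_pos hcond, if_pos hcond]
        · rw [if_neg hcond, if_neg hcond, smul_zero]
      have hsplit := sum_map_filter_split (fun t' => decide (isT t')) (pterm i) L₁
      rw [htripp, hσ0, zero_smul, zero_add] at hsplit
      rw [hL₂]
      exact hsplit.symm
    have hbound2 : ∀ t' ∈ L₂, t'.c ≠ 0 → tmeas hat t' < M := by
      intro t' ht' hc'
      rw [hL₂] at ht'
      have h1 := (List.mem_filter.mp ht').2
      have h2 : ¬ isT t' := by
        intro h
        rw [decide_eq_true h] at h1
        simp at h1
      exact (hboundL₁ t' (List.mem_of_mem_filter ht') hc').resolve_right h2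
    have hfin := IH M hMk L₂ hbound2 hsum2 i
    have hfinal : (L.map (pterm i)).sum
        = ((L.map (pterm i)).sum - (L₁.map (pterm i)).sum) + (L₂.map (pterm i)).sum := by
      rw [hpA2]; abel
    rw [hfinal]
    exact C.add_mem hdiff (hpA2 ▸ hfin)

end AnickAux
namespace AnickAux

variable {p d : ℕ} {I : Type*}

lemma list_sum_mul {R : Type*} [NonUnitalNonAssocSemiring R] (l : List R) (z : R) :
    l.sum * z = (l.map (fun x => x * z)).sum := by
  induction l with
  | nil => simp
  | cons a l ih => simp [add_mul, ih]

lemma sum_map_neg' {M : Type*} [AddCommGroup M] {α : Type*} (l : List α) (f : α → M) :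
    (l.map fun a => -f a).sum = -(l.map f).sum := by
  induction l with
  | nil => simp
  | cons a l ih => simp only [List.map_cons, List.sum_cons, ih]; abel

lemma lmul_eq_mapDomain (v : Word d) (z : FA p d) :
    MonoidAlgebra.single v (1:ZMod p) * z = MonoidAlgebra.mapDomain (fun w => v * w) z := by
  induction z using MonoidAlgebra.induction_linear with
  | zero => simp
  | add f g hf hg => rw [mul_add, MonoidAlgebra.mapDomain_add, hf, hg]
  | single a b =>
    rw [MonoidAlgebra.mapDomain_single]
    show MonoidAlgebra.single v 1 * MonoidAlgebra.single a b = _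
    rw [MonoidAlgebra.single_mul_single, one_mul]

lemma lmul_expand (v : Word d) (z : FA p d) :
    MonoidAlgebra.single v (1:ZMod p) * z
      = ∑ w ∈ z.coeff.support, z.coeff w • MonoidAlgebra.single (v * w) 1 := by
  rw [lmul_eq_mapDomain, MonoidAlgebra.mapDomain, Finsupp.mapDomain, Finsupp.sum, MonoidAlgebra.ofCoeff_sum]
  refine Finset.sum_congr rfl fun w hw => ?_
  rw [MonoidAlgebra.smul_single']
  simp

lemma expand_left (a Y : FA p d) :
    a * Y = ∑ u ∈ a.coeff.support, (a.coeff u) • (MonoidAlgebra.single u 1 * Y) := by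
  conv_lhs => rw [← MonoidAlgebra.sum_coeff_single a]
  rw [Finsupp.sum_mul]
  rw [Finsupp.sum]
  refine Finset.sum_congr rfl fun u hu => ?_
  have h : (MonoidAlgebra.single u (a.coeff u) : FA p d) = (a.coeff u) • MonoidAlgebra.single u 1 := by
    rw [MonoidAlgebra.smul_single']; simp
  rw [h, smul_mul_assoc]

lemma expand_right (x b : FA p d) :
    x * b = ∑ v ∈ b.coeff.support, (b.coeff v) • (x * MonoidAlgebra.single v 1) := by
  conv_lhs => rw [← MonoidAlgebra.sum_coeff_single b]
  rw [Finsupp.mul_sum]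
  rw [Finsupp.sum]
  refine Finset.sum_congr rfl fun v hv => ?_
  have h : (MonoidAlgebra.single v (b.coeff v) : FA p d) = (b.coeff v) • MonoidAlgebra.single v 1 := by
    rw [MonoidAlgebra.smul_single']; simp
  rw [h, mul_smul_comm]

/-- The set of elements representable as a finite sum of terms `c • u Z_j v` with
`(u,j,v)` satisfying `Q`, as a submodule. -/
def repSub (Z : I → FA p d) (Q : Word d → I → Word d → Prop) :
    Submodule (ZMod p) (FA p d) where
  carrier := {x | ∃ L : List (Trm p d I), (∀ t ∈ L, Q t.u t.j t.v) ∧ x = (L.map (tval Z)).sum}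
  add_mem' := by
    rintro a b ⟨La, hQa, rfl⟩ ⟨Lb, hQb, rfl⟩
    refine ⟨La ++ Lb, ?_, by rw [List.map_append, List.sum_append]⟩
    intro t ht
    rcases List.mem_append.mp ht with h | h
    · exact hQa t h
    · exact hQb t h
  zero_mem' := ⟨[], by simp, by simp⟩
  smul_mem' := by
    rintro c x ⟨L, hQ, rfl⟩
    refine ⟨L.map (fun t => ⟨c * t.c, t.u, t.j, t.v⟩), ?_, ?_⟩
    · intro t ht
      obtain ⟨t', ht', rfl⟩ := List.mem_map.mp ht
      exact hQ t' ht'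
    · rw [List.smul_sum, List.map_map, List.map_map]
      refine congrArg List.sum (List.map_congr_left fun t ht => ?_)
      show c • tval Z t = tval Z ⟨c * t.c, t.u, t.j, t.v⟩
      rw [tval, tval, smul_smul]

lemma C_le_rep (Z : I → FA p d) :
    twoSidedSpan p d {x | ∃ i : I, x = Z i} ≤ repSub Z (fun _ _ _ => True) := by
  rw [twoSidedSpan, Submodule.span_le]
  rintro x ⟨a, g, b, ⟨j, rfl⟩, rfl⟩
  show a * Z j * b ∈ repSub Z (fun _ _ _ => True)
  rw [mul_assoc, expand_left a (Z j * b)]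
  refine Submodule.sum_mem _ fun u hu => Submodule.smul_mem _ _ ?_
  rw [← mul_assoc, expand_right (MonoidAlgebra.single u 1 * Z j) b]
  refine Submodule.sum_mem _ fun v hv => Submodule.smul_mem _ _ ?_
  exact ⟨[⟨1, u, j, v⟩], fun _ _ => trivial, by simp [tval, sandw]⟩

lemma word_ne_one_of_mul {v w : Word d} (h : v * w = 1) : w = 1 := by
  have h' := congrArg FreeMonoid.toList h
  simp only [FreeMonoid.toList_mul, FreeMonoid.toList_one, List.append_eq_nil_iff] at h'
  apply word_toList_inj
  rw [FreeMonoid.toList_one, h'.2]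

lemma CA1_le_rep (Z : I → FA p d) :
    Submodule.span (ZMod p) {x : FA p d |
        ∃ c ∈ twoSidedSpan p d {x | ∃ i : I, x = Z i}, ∃ z ∈ augIdeal p d, x = c * z}
      ≤ repSub Z (fun _ _ v => v ≠ 1) := by
  rw [Submodule.span_le]
  rintro x ⟨c, hc, z, hz, rfl⟩
  obtain ⟨L, -, rfl⟩ := C_le_rep Z hc
  rw [list_sum_mul, List.map_map]
  refine list_sum_mem fun y hy => ?_
  obtain ⟨t, ht, rfl⟩ := List.mem_map.mp hy
  show tval Z t * z ∈ repSub Z (fun _ _ v => v ≠ 1)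
  have hexp : tval Z t * z = ∑ w ∈ z.coeff.support, (t.c * z.coeff w) • sandw t.u (t.v * w) (Z t.j) := by
    rw [tval, smul_mul_assoc]
    have h1 : sandw t.u t.v (Z t.j) * z
        = ∑ w ∈ z.coeff.support, z.coeff w • sandw t.u (t.v * w) (Z t.j) := by
      show (MonoidAlgebra.single t.u 1 * Z t.j * MonoidAlgebra.single t.v 1) * z = _
      rw [mul_assoc, lmul_expand t.v z, Finset.mul_sum]
      refine Finset.sum_congr rfl fun w hw => ?_
      rw [mul_smul_comm]
      rfl
    rw [h1, Finset.smul_sum]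
    refine Finset.sum_congr rfl fun w hw => ?_
    rw [smul_smul]
  rw [hexp]
  refine Submodule.sum_mem _ fun w hw => ?_
  have hw1 : w ≠ 1 := by
    intro h
    rw [h] at hw
    exact (Finsupp.mem_support_iff.mp hw) hz
  refine ⟨[⟨t.c * z.coeff w, t.u, t.j, t.v * w⟩], ?_, by simp [tval]⟩
  intro t' ht'
  rw [List.mem_singleton.mp ht']
  show t.v * w ≠ 1
  exact fun h => hw1 (word_ne_one_of_mul h)

lemma smul_single_sum (x : FA p d) :
    ∑ u ∈ x.coeff.support, x.coeff u • MonoidAlgebra.single u (1:ZMod p) = x := by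
  conv_rhs => rw [← MonoidAlgebra.sum_coeff_single x]
  rw [Finsupp.sum]
  refine Finset.sum_congr rfl fun u hu => ?_
  rw [MonoidAlgebra.smul_single']
  simp

end AnickAux
open AnickAux
/-- (Anick, part (i); Theorem 1.5(i) of the paper.)  Let `(Z i)` be a locally finite
family of nonzero homogeneous elements of `A = 𝔽_p⟨X_1, …, X_d⟩` of degrees
`ndeg i ≥ 1` whose highest terms form a combinatorially free family, and let `C` be
the two-sided ideal generated by the `Z i`.  Then (a) `C = L + C·A₁`, where `L` is the
span of the products `a * Z i`, and (b) any finitely supported family `(a i)` with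
`∑ a i * Z i ∈ C·A₁` satisfies `a i ∈ C` for all `i`; i.e. the classes of the `Z i`
form a basis of `C/(C·A₁)` as a free left module over `A/C`. -/
theorem stmt_7 (p d : ℕ) (hp : p.Prime) (hd : 1 ≤ d)
    {I : Type*} (Z : I → FA p d) (ndeg : I → ℕ) (hat : I → Word d)
    (hdeg : ∀ i, 1 ≤ ndeg i)
    (hZ0 : ∀ i, Z i ≠ 0)
    (hZhom : ∀ i, Z i ∈ homComponent p d (ndeg i))
    (hlf : ∀ n : ℕ, {i : I | ndeg i = n}.Finite)
    (hhat : ∀ i, IsHighestTerm p d (Z i) (hat i))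
    (hcf : CombFreeFam fun i => FreeMonoid.toList (hat i)) :
    letI C := twoSidedSpan p d {x | ∃ i : I, x = Z i}
    letI L := Submodule.span (ZMod p) {x : FA p d | ∃ (a : FA p d) (i : I), x = a * Z i}
    letI CA1 := Submodule.span (ZMod p)
      {x : FA p d | ∃ c ∈ C, ∃ z ∈ augIdeal p d, x = c * z}
    C = L ⊔ CA1 ∧
      ∀ a : I →₀ FA p d, (a.sum fun i q => q * Z i) ∈ CA1 → ∀ i : I, a i ∈ C := by
  haveI : Fact (Nat.Prime p) := ⟨hp⟩
  classical
  refine ⟨?_, ?_⟩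
  · -- part (a)
    apply le_antisymm
    · refine Submodule.span_le.mpr ?_
      rintro x ⟨A, G, B, ⟨j, rfl⟩, rfl⟩
      simp only [SetLike.mem_coe]
      have hsplit : A * Z j * B = (B.coeff 1) • (A * Z j) + (A * Z j) * (B - (B.coeff 1) • 1) := by
        rw [mul_sub, mul_smul_comm, mul_one]
        abel
      rw [hsplit]
      refine Submodule.add_mem _ ?_ ?_
      · exact Submodule.mem_sup_left
          (Submodule.smul_mem _ _ (Submodule.subset_span ⟨A, j, rfl⟩))
      · refine Submodule.mem_sup_right (Submodule.subset_span ?_)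
        refine ⟨A * Z j,
          Submodule.subset_span ⟨A, Z j, 1, ⟨j, rfl⟩, (mul_one _).symm⟩,
          B - (B.coeff 1) • 1, ?_, rfl⟩
        show (B - (B.coeff 1) • (1 : FA p d)).coeff 1 = 0
        rw [MonoidAlgebra.coeff_sub, Finsupp.sub_apply, MonoidAlgebra.coeff_smul, Finsupp.smul_apply]
        rw [show ((1 : FA p d) : FA p d).coeff 1 = 1 from by
          rw [MonoidAlgebra.one_def]; exact Finsupp.single_eq_same]
        simp
    · refine sup_le ?_ ?_
      · refine Submodule.span_le.mpr ?_
        rintro x ⟨A, j, rfl⟩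
        exact Submodule.subset_span ⟨A, Z j, 1, ⟨j, rfl⟩, (mul_one _).symm⟩
      · refine Submodule.span_le.mpr ?_
        rintro x ⟨c, hc, z, hz, rfl⟩
        show c * z ∈ twoSidedSpan p d {x | ∃ i : I, x = Z i}
        refine Submodule.span_induction (p := fun y _ => y * z ∈ twoSidedSpan p d {x | ∃ i : I, x = Z i})
          ?_ ?_ ?_ ?_ hc
        · rintro x' ⟨A, G, B, hG, rfl⟩
          show A * G * B * z ∈ _
          exact Submodule.subset_span ⟨A, G, B * z, hG, by noncomm_ring⟩
        · show (0 : FA p d) * z ∈ _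
          rw [zero_mul]; exact Submodule.zero_mem _
        · intro x' y' _ _ hx' hy'
          show (x' + y') * z ∈ _
          rw [add_mul]; exact Submodule.add_mem _ hx' hy'
        · intro r x' _ hx'
          show (r • x') * z ∈ _
          rw [smul_mul_assoc]; exact Submodule.smul_mem _ _ hx'
  · -- part (b)
    intro a hy i
    obtain ⟨Ly, hLyQ, hLy⟩ := CA1_le_rep Z hy
    set La : List (Trm p d I) := a.support.toList.flatMap
      (fun i' => (a i').coeff.support.toList.map fun u => (⟨(a i').coeff u, u, i', 1⟩ : Trm p d I)) with hLa
    set Ltot : List (Trm p d I) :=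
      La ++ (Ly.map fun t => (⟨-t.c, t.u, t.j, t.v⟩ : Trm p d I)) with hLtot
    have hsumLa : (La.map (tval Z)).sum = a.sum fun i q => q * Z i := by
      rw [hLa, sum_map_flatMap]
      have h1 : ∀ i' ∈ a.support.toList,
          ((((a i').coeff.support.toList.map fun u => (⟨(a i').coeff u, u, i', 1⟩ : Trm p d I)).map
            (tval Z)).sum) = a i' * Z i' := by
        intro i' _
        rw [List.map_map, Finset.sum_map_toList]
        simp only [Function.comp_def]
        rw [expand_left (a i') (Z i')]
        refine Finset.sum_congr rfl fun u hu => ?_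
        show ((a i').coeff u) • sandw u 1 (Z i') = _
        congr 1
        show MonoidAlgebra.single u 1 * Z i' * MonoidAlgebra.single 1 1 = _
        rw [← MonoidAlgebra.one_def, mul_one]
      rw [List.map_congr_left h1, Finset.sum_map_toList]
      rfl
    have hsumtot : (Ltot.map (tval Z)).sum = 0 := by
      rw [hLtot, List.map_append, List.sum_append, hsumLa, List.map_map]
      have h2 : (Ly.map (tval Z ∘ fun t => (⟨-t.c, t.u, t.j, t.v⟩ : Trm p d I))).sum
          = -(Ly.map (tval Z)).sum := by
        rw [← sum_map_neg']
        refine congrArg List.sum (List.map_congr_left fun t ht => ?_)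
        show tval Z ⟨-t.c, t.u, t.j, t.v⟩ = -(tval Z t)
        rw [tval, tval, neg_smul]
      rw [h2, ← hLy]
      simp
    have hbound : ∀ t ∈ Ltot, t.c ≠ 0 →
        tmeas hat t < (Ltot.map (tmeas hat)).foldr max 0 + 1 := by
      intro t ht _
      have := le_foldr_max (tmeas hat) Ltot t ht
      omega
    have hmain := mainM Z ndeg hat hdeg (fun i' => support_len_of_homComponent (hZhom i'))
      hhat hcf _ Ltot hbound hsumtot i
    have hid : (Ltot.map (pterm i)).sum = a i := by
      rw [hLtot, List.map_append, List.sum_append]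
      have h3 : ((Ly.map fun t => (⟨-t.c, t.u, t.j, t.v⟩ : Trm p d I)).map (pterm i)).sum
          = 0 := by
        rw [List.map_map]
        refine List.sum_eq_zero fun x hx => ?_
        obtain ⟨t, ht, rfl⟩ := List.mem_map.mp hx
        show pterm i (⟨-t.c, t.u, t.j, t.v⟩ : Trm p d I) = 0
        unfold pterm
        rw [if_neg]
        rintro ⟨-, hv⟩
        exact hLyQ t ht hv
      have h4 : (La.map (pterm i)).sum = a i := by
        rw [hLa, sum_map_flatMap]
        have h5 : ∀ i' ∈ a.support.toList,
            ((((a i').coeff.support.toList.map fun u => (⟨(a i').coeff u, u, i', 1⟩ : Trm p d I)).map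
              (pterm i)).sum) = if i' = i then a i' else 0 := by
          intro i' _
          rw [List.map_map, Finset.sum_map_toList]
          simp only [Function.comp_def]
          by_cases hii : i' = i
          · rw [if_pos hii]
            have h6 : ∀ u ∈ (a i').coeff.support,
                pterm i (⟨(a i').coeff u, u, i', 1⟩ : Trm p d I)
                  = ((a i').coeff u) • MonoidAlgebra.single u (1:ZMod p) := by
              intro u hu
              unfold pterm
              rw [if_pos ⟨hii, rfl⟩]
            rw [Finset.sum_congr rfl h6, smul_single_sum]
          · rw [if_neg hii]
            refine Finset.sum_eq_zero fun u hu => ?_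
            unfold pterm
            rw [if_neg (fun h => hii h.1)]
        rw [List.map_congr_left h5, Finset.sum_map_toList,
          Finset.sum_ite_eq' a.support i (fun i' => a i')]
        by_cases hmem : i ∈ a.support
        · rw [if_pos hmem]
        · rw [if_neg hmem, Finsupp.notMem_support_iff.mp hmem]
      rw [h3, h4, add_zero]
    rw [← hid]
    exact hmain
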